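/- Descent estimate along a truncated pseudogradient flow: let E be a Banach space, Φ : E → ℝ continuously Fréchet differentiable, V : E → E, μ ∈ (0, 1], δ > 0, and define h : [0, ∞) → ℝ by h(s) = 1 for s ≤ 1 and h(s) = 1/s for s ≥ 1. Suppose w : [0, δ] → E is differentiable with w'(t) = −h(‖Φ'(w(t))‖) V(w(t)) for all t ∈ [0, δ], and that for every t ∈ [0, δ] the pseudogradient inequalities ‖V(w(t))‖ ≤ 2‖Φ'(w(t))‖ and Φ'(w(t))(V(w(t))) ≥ ‖Φ'(w(t))‖² hold, together with the gradient lower bound ‖Φ'(w(t))‖ ≥ μ. Then Φ(w(δ)) ≤ Φ(w(0)) − δ μ². -/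

import Mathlib

/-- Descent estimate along a truncated pseudogradient flow: if `w` solves
`w' = -h(‖Φ'(w)‖) • V(w)` on `[0, δ]`, where `V` satisfies the pseudogradient
inequalities along the flow and `‖Φ'(w(t))‖ ≥ μ`, then `Φ(w(δ)) ≤ Φ(w(0)) - δμ²`. -/
theorem descent_along_pseudogradient_flow {E : Type*} [NormedAddCommGroup E]
    [NormedSpace ℝ E] [CompleteSpace E]
    (Φ : E → ℝ) (hΦ : ContDiff ℝ 1 Φ) (V : E → E) (μ δ : ℝ)
    (hμ0 : 0 < μ) (hμ1 : μ ≤ 1) (hδ : 0 < δ)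
    (h : ℝ → ℝ)
    (hh1 : ∀ s : ℝ, 0 ≤ s → s ≤ 1 → h s = 1)
    (hh2 : ∀ s : ℝ, 1 ≤ s → h s = 1 / s)
    (w : ℝ → E)
    (hflow : ∀ t ∈ Set.Icc (0 : ℝ) δ,
      HasDerivAt w (-(h ‖fderiv ℝ Φ (w t)‖) • V (w t)) t)
    (hV1 : ∀ t ∈ Set.Icc (0 : ℝ) δ, ‖V (w t)‖ ≤ 2 * ‖fderiv ℝ Φ (w t)‖)
    (hV2 : ∀ t ∈ Set.Icc (0 : ℝ) δ, ‖fderiv ℝ Φ (w t)‖ ^ 2 ≤ fderiv ℝ Φ (w t) (V (w t)))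
    (hgrad : ∀ t ∈ Set.Icc (0 : ℝ) δ, μ ≤ ‖fderiv ℝ Φ (w t)‖) :
    Φ (w δ) ≤ Φ (w 0) - δ * μ ^ 2 := by
  set g : ℝ → ℝ := fun t => Φ (w t) + μ ^ 2 * t with hgdef
  have key : ∀ t ∈ Set.Icc (0 : ℝ) δ,
      HasDerivAt g
        (fderiv ℝ Φ (w t) (-(h ‖fderiv ℝ Φ (w t)‖) • V (w t)) + μ ^ 2) t := by
    intro t ht
    have hF : HasFDerivAt Φ (fderiv ℝ Φ (w t)) (w t) :=
      (hΦ.differentiable one_ne_zero (w t)).hasFDerivAt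
    have h1 := hF.comp_hasDerivAt t (hflow t ht)
    have h2 : HasDerivAt (fun t : ℝ => μ ^ 2 * t) (μ ^ 2) t := by
      simpa using (hasDerivAt_id t).const_mul (μ ^ 2)
    exact h1.add h2
  have hnonpos : ∀ t ∈ Set.Icc (0 : ℝ) δ,
      fderiv ℝ Φ (w t) (-(h ‖fderiv ℝ Φ (w t)‖) • V (w t)) + μ ^ 2 ≤ 0 := by
    intro t ht
    set F := fderiv ℝ Φ (w t) with hFdef
    have hmap : F (-(h ‖F‖) • V (w t)) = -(h ‖F‖ * F (V (w t))) := by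
      rw [map_smul, smul_eq_mul, neg_mul]
    rw [hmap]
    have hs : μ ≤ ‖F‖ := hgrad t ht
    have hV2' : ‖F‖ ^ 2 ≤ F (V (w t)) := hV2 t ht
    have hμ2 : μ ^ 2 ≤ h ‖F‖ * F (V (w t)) := by
      rcases le_total ‖F‖ 1 with hle | hle
      · rw [hh1 _ (norm_nonneg _) hle]
        have : μ ^ 2 ≤ ‖F‖ ^ 2 := by nlinarith
        linarith
      · rw [hh2 _ hle]
        have hFpos : (0:ℝ) < ‖F‖ := lt_of_lt_of_le one_pos hle
        have h1 : 1 / ‖F‖ * F (V (w t)) ≥ 1 / ‖F‖ * ‖F‖ ^ 2 := by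
          apply mul_le_mul_of_nonneg_left hV2' (by positivity)
        have h2 : 1 / ‖F‖ * ‖F‖ ^ 2 = ‖F‖ := by field_simp
        nlinarith
    linarith
  have hanti : AntitoneOn g (Set.Icc 0 δ) := by
    apply antitoneOn_of_deriv_nonpos (convex_Icc 0 δ)
    · exact fun t ht => ((key t ht).continuousAt).continuousWithinAt
    · intro t ht
      rw [interior_Icc] at ht
      exact (key t (Set.mem_Icc_of_Ioo ht)).differentiableAt.differentiableWithinAt
    · intro t ht
      rw [interior_Icc] at ht
      rw [(key t (Set.mem_Icc_of_Ioo ht)).deriv]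
      exact hnonpos t (Set.mem_Icc_of_Ioo ht)
  have := hanti (Set.left_mem_Icc.2 hδ.le) (Set.right_mem_Icc.2 hδ.le) hδ.le
  simp only [hgdef] at this
  nlinarith
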